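/- If S ⊆ ℕ^ℕ is Δ⁰₂, then S = S \ [S_∞] (since S_∞ = ∅ and hence [S_∞] = ∅). -/

import Mathlib

open Ordinal Filter Topology

/-- The first `n` values of `f` as a finite sequence. -/
def seg (f : ℕ → ℕ) (n : ℕ) : List ℕ := (List.range n).map f

/-- `[X]`: the set of infinite sequences all of whose initial segments lie in `X`. -/
def ext (X : Set (List ℕ)) : Set (ℕ → ℕ) := {f | ∀ n, seg f n ∈ X}

/-- `σ` is an initial segment of `f`. -/
def isInit (σ : List ℕ) (f : ℕ → ℕ) : Prop := seg f σ.length = σ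

/-- One step of the derivative process relative to `S`. -/
def derivStep (S : Set (ℕ → ℕ)) (X : Set (List ℕ)) : Set (List ℕ) :=
  {x ∈ X | ∃ f g : ℕ → ℕ, f ∈ ext X ∧ g ∈ ext X ∧ isInit x f ∧ isInit x g ∧ f ∈ S ∧ g ∉ S}

/-- The transfinite sequence `S_α`. -/
noncomputable def dSeq (S : Set (ℕ → ℕ)) (α : Ordinal.{0}) : Set (List ℕ) :=
  Ordinal.limitRecOn α Set.univ (fun _ X => derivStep S X)
    (fun o _ ih => ⋂ (β : Set.Iio o), ih β.1 β.2)

/-- `α(S)`: the least ordinal where the process stabilizes. -/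
noncomputable def kernelOrd (S : Set (ℕ → ℕ)) : Ordinal.{0} :=
  sInf {α | dSeq S α = dSeq S (α + 1)}

/-- `S_∞`, the kernel. -/
noncomputable def kernel (S : Set (ℕ → ℕ)) : Set (List ℕ) := dSeq S (kernelOrd S)

/-- `β(σ)`: the least ordinal `α` with `σ ∉ S_α`. -/
noncomputable def bOrd (S : Set (ℕ → ℕ)) (σ : List ℕ) : Ordinal.{0} :=
  sInf {α | σ ∉ dSeq S α}

open Classical in
/-- `S` is guessable. -/
def Guessable (S : Set (ℕ → ℕ)) : Prop :=
  ∃ G : List ℕ → ℕ, ∀ f : ℕ → ℕ,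
    Tendsto (fun n => G (seg f n)) atTop (𝓝 (if f ∈ S then 1 else 0))

/-- `Δ⁰₂`: both a countable union of closed sets and a countable intersection of open sets. -/
def IsDelta02 (S : Set (ℕ → ℕ)) : Prop :=
  (∃ F : ℕ → Set (ℕ → ℕ), (∀ n, IsClosed (F n)) ∧ S = ⋃ n, F n) ∧
  (∃ U : ℕ → Set (ℕ → ℕ), (∀ n, IsOpen (U n)) ∧ S = ⋂ n, U n)

/- ### Auxiliary lemmas -/

lemma seg_length (f : ℕ → ℕ) (n : ℕ) : (seg f n).length = n := by simp [seg]

lemma seg_eq_of_agree {f g : ℕ → ℕ} {n : ℕ} (h : ∀ i < n, f i = g i) : seg f n = seg g n := by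
  simp only [seg]
  exact List.map_congr_left fun a ha => h a (List.mem_range.mp ha)

lemma agree_of_seg_eq {f g : ℕ → ℕ} {n : ℕ} (h : seg f n = seg g n) : ∀ i < n, f i = g i := by
  intro i hi
  have h1 : (seg f n)[i]'(by simp [seg_length, hi]) = f i := by simp [seg]
  have h2 : (seg g n)[i]'(by simp [seg_length, hi]) = g i := by simp [seg]
  rw [← h1, ← h2]
  exact List.getElem_of_eq h _

lemma dSeq_zero (S : Set (ℕ → ℕ)) : dSeq S 0 = Set.univ :=
  Ordinal.limitRecOn_zero _ _ _

lemma dSeq_succ (S : Set (ℕ → ℕ)) (α : Ordinal.{0}) :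
    dSeq S (α + 1) = derivStep S (dSeq S α) := by
  have : α + 1 = Order.succ α := (Ordinal.add_one_eq_succ α)
  rw [dSeq, this, Ordinal.limitRecOn_succ]
  rfl

lemma dSeq_limit (S : Set (ℕ → ℕ)) {o : Ordinal.{0}} (ho : Order.IsSuccLimit o) :
    dSeq S o = ⋂ (β : Set.Iio o), dSeq S β.1 :=
  Ordinal.limitRecOn_limit _ _ _ _ ho

lemma derivStep_subset (S : Set (ℕ → ℕ)) (X : Set (List ℕ)) : derivStep S X ⊆ X :=
  fun _ hx => hx.1

lemma dSeq_anti (S : Set (ℕ → ℕ)) : ∀ {α β : Ordinal.{0}}, α ≤ β → dSeq S β ⊆ dSeq S α := by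
  intro α β
  induction β using Ordinal.limitRecOn with
  | zero =>
    intro h
    rw [nonpos_iff_eq_zero.mp h]
  | add_one γ ih =>
    intro h
    rw [← Order.succ_eq_add_one] at h ⊢
    rcases Order.le_succ_iff_eq_or_le.mp h with h' | h'
    · rw [h']
    · have : dSeq S (Order.succ γ) ⊆ dSeq S γ := by
        rw [← Ordinal.add_one_eq_succ, dSeq_succ]
        exact derivStep_subset _ _
      exact this.trans (ih h')
  | limit o ho ih =>
    intro h
    rcases eq_or_lt_of_le h with h' | h'
    · rw [h']
    · rw [dSeq_limit S ho]
      exact Set.iInter_subset (fun (β : Set.Iio o) => dSeq S β.1) ⟨α, h'⟩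

lemma exists_dSeq_fixed (S : Set (ℕ → ℕ)) : ∃ α : Ordinal.{0}, dSeq S α = dSeq S (α + 1) := by
  by_contra h
  push_neg at h
  have hssub : ∀ {a b : Ordinal.{0}}, a < b → dSeq S b ⊂ dSeq S a := by
    intro a b hab
    have h1 : dSeq S b ⊆ dSeq S (a + 1) := dSeq_anti S (by rw [Ordinal.add_one_eq_succ]; exact Order.succ_le_of_lt hab)
    have h2 : dSeq S (a + 1) ⊆ dSeq S a := by rw [dSeq_succ]; exact derivStep_subset _ _
    refine ⟨h1.trans h2, fun hsub => ?_⟩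
    exact h a (le_antisymm (hsub.trans h1) h2)
  exact not_injective_of_ordinal (dSeq S) (by
    intro a b hab
    rcases lt_trichotomy a b with h' | h' | h'
    · exact absurd hab.symm (hssub h').ne
    · exact h'
    · exact absurd hab (hssub h').ne)

lemma kernel_fixed (S : Set (ℕ → ℕ)) : kernel S = derivStep S (kernel S) := by
  have hmem : kernelOrd S ∈ {α : Ordinal.{0} | dSeq S α = dSeq S (α + 1)} :=
    csInf_mem (exists_dSeq_fixed S)
  have := hmem
  simp only [Set.mem_setOf_eq] at this
  rw [kernel, ← dSeq_succ, ← this]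

lemma isOpen_segSet (X : Set (List ℕ)) (n : ℕ) : IsOpen {f : ℕ → ℕ | seg f n ∈ X} := by
  rw [isOpen_iff_forall_mem_open]
  intro f hf
  refine ⟨PiNat.cylinder (E := fun _ : ℕ => ℕ) f n, fun g hg => ?_, PiNat.isOpen_cylinder (E := fun _ : ℕ => ℕ) f n,
    PiNat.self_mem_cylinder (E := fun _ : ℕ => ℕ) f n⟩
  have : seg g n = seg f n := seg_eq_of_agree (PiNat.mem_cylinder_iff.mp hg)
  simpa [this] using hf

lemma isClosed_ext (X : Set (List ℕ)) : IsClosed (ext X) := by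
  have : ext X = ⋂ n, {f : ℕ → ℕ | seg f n ∈ X} := by
    ext f; simp [ext]
  rw [this]
  exact isClosed_iInter fun n => by
    have : {f : ℕ → ℕ | seg f n ∈ X} = {f : ℕ → ℕ | seg f n ∈ Xᶜ}ᶜ := by
      ext f; simp
    rw [this]
    exact (isOpen_segSet Xᶜ n).isClosed_compl

/-- Density: every point of `ext (kernel S)` can be approximated by points of
`ext (kernel S) ∩ S` and of `ext (kernel S) \ S`. -/
lemma kernel_density (S : Set (ℕ → ℕ)) {g : ℕ → ℕ} (hg : g ∈ ext (kernel S)) (n : ℕ) :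
    (∃ p ∈ ext (kernel S), p ∈ S ∧ ∀ i < n, p i = g i) ∧
    (∃ q ∈ ext (kernel S), q ∉ S ∧ ∀ i < n, q i = g i) := by
  have hσ : seg g n ∈ derivStep S (kernel S) := by
    rw [← kernel_fixed]; exact hg n
  obtain ⟨-, p, q, hpK, hqK, hip, hiq, hpS, hqS⟩ := hσ
  rw [isInit, seg_length] at hip hiq
  exact ⟨⟨p, hpK, hpS, agree_of_seg_eq hip⟩, ⟨q, hqK, hqS, agree_of_seg_eq hiq⟩⟩

theorem stmt12 (S : Set (ℕ → ℕ)) (h : IsDelta02 S) :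
    S = S \ ext (kernel S) := by
  obtain ⟨⟨F, hFc, hFU⟩, ⟨U, hUo, hUI⟩⟩ := h
  have main : ∀ f ∈ S, f ∉ ext (kernel S) := by
    intro f hfS hfK
    set K : Set (ℕ → ℕ) := ext (kernel S) with hK
    have hKc : IsClosed K := isClosed_ext _
    haveI : CompleteSpace K := hKc.completeSpace_coe
    haveI : Filter.IsCountablyGenerated (uniformity K) := by
      rw [uniformity_subtype]; infer_instance
    haveI : Nonempty K := ⟨⟨f, hfK⟩⟩
    -- the countable closed cover of K
    set G : ℕ ⊕ ℕ → Set K :=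
      Sum.elim (fun n => Subtype.val ⁻¹' F n) (fun n => Subtype.val ⁻¹' (U n)ᶜ) with hG
    have hGc : ∀ i, IsClosed (G i) := by
      rintro (n | n)
      · exact (hFc n).preimage continuous_subtype_val
      · exact ((hUo n).isClosed_compl).preimage continuous_subtype_val
    have hGU : ⋃ i, G i = Set.univ := by
      ext x
      simp only [Set.mem_univ, iff_true, Set.mem_iUnion]
      by_cases hx : (x : ℕ → ℕ) ∈ S
      · rw [hFU] at hx
        obtain ⟨n, hn⟩ := Set.mem_iUnion.mp hx
        exact ⟨Sum.inl n, hn⟩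
      · rw [hUI] at hx
        obtain ⟨n, hn⟩ : ∃ n, (x : ℕ → ℕ) ∉ U n := by
          by_contra hc; push_neg at hc; exact hx (Set.mem_iInter.mpr hc)
        exact ⟨Sum.inr n, hn⟩
    obtain ⟨i, g, hgi⟩ := nonempty_interior_of_iUnion_of_closed hGc hGU
    -- extract an ambient open set and then a cylinder
    obtain ⟨t, htsub, hto, hgt⟩ := mem_interior.mp hgi
    obtain ⟨W, hWo, hWt⟩ := isOpen_induced_iff.mp hto
    have hgW : (g : ℕ → ℕ) ∈ W := by rw [← hWt] at hgt; exact hgt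
    obtain ⟨c, ⟨x, m, rfl⟩, hgc, hcW⟩ :=
      (PiNat.isTopologicalBasis_cylinders (fun _ : ℕ => ℕ)).exists_subset_of_mem_open hgW hWo
    -- density inside the cylinder
    obtain ⟨⟨p, hpK, hpS, hpag⟩, ⟨q, hqK, hqS, hqag⟩⟩ := kernel_density S g.2 m
    have hpc : p ∈ PiNat.cylinder x m := PiNat.mem_cylinder_iff.mpr
      (fun i hi => (hpag i hi).trans (PiNat.mem_cylinder_iff.mp hgc i hi))
    have hqc : q ∈ PiNat.cylinder x m := PiNat.mem_cylinder_iff.mpr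
      (fun i hi => (hqag i hi).trans (PiNat.mem_cylinder_iff.mp hgc i hi))
    rcases i with n | n
    · -- q ∈ F n ⊆ S, contradiction with q ∉ S
      have : (⟨q, hqK⟩ : K) ∈ t := by rw [← hWt]; exact hcW hqc
      have hqF : q ∈ F n := htsub this
      exact hqS (hFU ▸ Set.mem_iUnion.mpr ⟨n, hqF⟩)
    · -- p ∉ U n but p ∈ S ⊆ U n, contradiction
      have : (⟨p, hpK⟩ : K) ∈ t := by rw [← hWt]; exact hcW hpc
      have hpU : p ∉ U n := htsub this
      exact hpU (Set.mem_iInter.mp (hUI ▸ hpS) n)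
  ext f
  constructor
  · exact fun hf => ⟨hf, main f hf⟩
  · exact fun hf => hf.1
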